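/- Let m ≥ 1 and let q : F_2^{2m} → F_2 be the quadratic function q(x) = ∑_{k<m} x_k x_{m+k}. Then for every c ∈ F_2^{2m} with q(c) = 0 there exists an invertible F_2-linear map A on F_2^{2m} such that q(A x) = q(x) + ⟨c, x⟩ for all x ∈ F_2^{2m}. -/

import Mathlib

open Finset

/-- Inner product on `F_2^n`. -/
def dotp {n : ℕ} (x y : Fin n → ZMod 2) : ZMod 2 := ∑ i, x i * y i

/-- Hamming weight of a Boolean function: the cardinality of its support. -/
def wt {n : ℕ} (f : (Fin n → ZMod 2) → ZMod 2) : ℕ :=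
  (Finset.univ.filter fun x => f x = 1).card

/-- Walsh–Hadamard transform of a Boolean function. -/
def walsh {n : ℕ} (f : (Fin n → ZMod 2) → ZMod 2) (x : Fin n → ZMod 2) : ℤ :=
  ∑ y : Fin n → ZMod 2, (-1 : ℤ) ^ (f y + dotp x y).val

/-- A Boolean function on `F_2^(2m)` is bent if its Walsh–Hadamard transform has constant
absolute value `2^m`. -/
def IsBent {m : ℕ} (f : (Fin (2 * m) → ZMod 2) → ZMod 2) : Prop :=
  ∀ x, |walsh f x| = 2 ^ m

/-- The dual of a bent function: `f̂ x = 0` if `W_f x = 2^m`, and `1` otherwise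
(for bent `f` the other case is exactly `W_f x = -2^m`). -/
def dual {m : ℕ} (f : (Fin (2 * m) → ZMod 2) → ZMod 2) :
    (Fin (2 * m) → ZMod 2) → ZMod 2 :=
  fun x => if walsh f x = 2 ^ m then 0 else 1

/-- The weight class of a bent function on `F_2^(2m)`:
`0` if its weight is `2^(2m-1) - 2^(m-1)`, and `1` otherwise. -/
def wc {m : ℕ} (f : (Fin (2 * m) → ZMod 2) → ZMod 2) : ZMod 2 :=
  if wt f = 2 ^ (2 * m - 1) - 2 ^ (m - 1) then 0 else 1

/-- The Cayley graph of a Boolean function: distinct `x`, `y` are adjacent iff `f (x+y) = 1`. -/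
def cayley {n : ℕ} (f : (Fin n → ZMod 2) → ZMod 2) : SimpleGraph (Fin n → ZMod 2) where
  Adj x y := x ≠ y ∧ f (x + y) = 1
  symm := ⟨fun x y h => ⟨h.1.symm, by rw [add_comm]; exact h.2⟩⟩
  loopless := ⟨fun x h => h.1 rfl⟩

instance cayleyAdjDecidable {n : ℕ} (f : (Fin n → ZMod 2) → ZMod 2) :
    DecidableRel (cayley f).Adj :=
  fun x y => inferInstanceAs (Decidable (x ≠ y ∧ f (x + y) = 1))

/-- The standard quadratic bent function `q x = ∑_{k<m} x_k x_{m+k}` on `F_2^(2m)`. -/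
def quadq {m : ℕ} (x : Fin (2 * m) → ZMod 2) : ZMod 2 :=
  ∑ k : Fin m, x ⟨k.1, by have := k.isLt; omega⟩ * x ⟨m + k.1, by have := k.isLt; omega⟩

lemma sum_split_two_mul {m : ℕ} (f : Fin (2 * m) → ZMod 2) :
    ∑ i, f i = ∑ k : Fin m,
      (f ⟨k.1, by have := k.isLt; omega⟩ + f ⟨m + k.1, by have := k.isLt; omega⟩) := by
  have h : m + m = 2 * m := by omega
  rw [← Fintype.sum_equiv (finCongr h) (fun j => f (finCongr h j)) f (fun j => rfl)]
  rw [Fin.sum_univ_add, ← Finset.sum_add_distrib]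
  refine Finset.sum_congr rfl fun k _ => ?_
  congr 1

/-- for `c` with `q c = 0` there is an invertible linear map `A` with
`q (A x) = q x + ⟨c, x⟩` for all `x`. -/
theorem quadratic_linear_equiv_of_qc_zero {m : ℕ} (hm : 1 ≤ m)
    (c : Fin (2 * m) → ZMod 2) (hc : quadq c = 0) :
    ∃ A : (Fin (2 * m) → ZMod 2) ≃ₗ[ZMod 2] (Fin (2 * m) → ZMod 2),
      ∀ x, quadq (A x) = quadq x + dotp c x := by
  -- a is c with the two halves swapped
  set a : Fin (2 * m) → ZMod 2 := fun i =>
    if h : (i : ℕ) < m then c ⟨m + i, by omega⟩ else c ⟨(i : ℕ) - m, by have := i.isLt; omega⟩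
    with ha_def
  have ha1 : ∀ k : Fin m, a ⟨k.1, by have := k.isLt; omega⟩
      = c ⟨m + k.1, by have := k.isLt; omega⟩ := by
    intro k; simp only [ha_def]; rw [dif_pos k.isLt]
  have ha2 : ∀ k : Fin m, a ⟨m + k.1, by have := k.isLt; omega⟩
      = c ⟨k.1, by have := k.isLt; omega⟩ := by
    intro k; simp only [ha_def]
    rw [dif_neg (by simp)]
    congr 1
    ext
    simp
  -- dotp c is linear
  have hd_add : ∀ x y, dotp c (x + y) = dotp c x + dotp c y := by
    intro x y
    simp [dotp, mul_add, Finset.sum_add_distrib]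
  have hd_smul : ∀ (r : ZMod 2) x, dotp c (r • x) = r * dotp c x := by
    intro r x
    simp [dotp, Finset.mul_sum, mul_left_comm]
  have hcomm : ∀ u v : ZMod 2, u * v + v * u = 0 := by decide
  -- dotp c a = 0
  have hca : dotp c a = 0 := by
    rw [dotp, sum_split_two_mul (fun i => c i * a i)]
    refine Finset.sum_eq_zero fun k _ => ?_
    simp only [ha1 k, ha2 k]
    exact hcomm _ _
  have hsq : ∀ t : ZMod 2, t * t = t := by decide
  -- the transvection
  set T : (Fin (2 * m) → ZMod 2) →ₗ[ZMod 2] (Fin (2 * m) → ZMod 2) :=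
    { toFun := fun x => x + dotp c x • a
      map_add' := by
        intro x y
        show (x + y) + dotp c (x + y) • a = (x + dotp c x • a) + (y + dotp c y • a)
        rw [hd_add, add_smul]
        abel
      map_smul' := by
        intro r x
        show (r • x) + dotp c (r • x) • a = r • (x + dotp c x • a)
        rw [hd_smul, mul_smul, smul_add]
    } with hT_def
  have hTval : ∀ x, T x = x + dotp c x • a := fun x => rfl
  have hinv : Function.Involutive T := by
    intro x
    rw [hTval, hTval, hd_add, hd_smul, hca, mul_zero, add_zero]
    have h2 : dotp c x • a + dotp c x • a = (0 : Fin (2 * m) → ZMod 2) := by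
      rw [← add_smul, CharTwo.add_self_eq_zero, zero_smul]
    rw [add_assoc, h2, add_zero]
  refine ⟨LinearEquiv.ofInvolutive T hinv, fun x => ?_⟩
  have hA : (LinearEquiv.ofInvolutive T hinv) x = x + dotp c x • a := rfl
  rw [hA]
  -- expand quadq
  have key : ∀ t : ZMod 2, quadq (x + t • a)
      = quadq x + t * dotp c x + (t * t) * quadq c := by
    intro t
    rw [dotp, sum_split_two_mul (fun i => c i * x i)]
    simp only [quadq]
    rw [Finset.mul_sum, Finset.mul_sum, ← Finset.sum_add_distrib, ← Finset.sum_add_distrib]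
    refine Finset.sum_congr rfl fun k _ => ?_
    simp only [Pi.add_apply, Pi.smul_apply, smul_eq_mul]
    rw [ha1 k, ha2 k]
    ring
  rw [key (dotp c x), hc, mul_zero, add_zero, hsq]
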